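/- Let R be an associative unital ℂ-algebra and let A, B, C, D : ℂ → R be functions; write T(u) for the 2×2 matrix over R with rows (A(u), B(u)) and (C(u), D(u)). Assume the RTT relation T²(v)·T¹(u)·R(u−v) = R(u−v)·T¹(u)·T²(v) holds for all u, v ∈ ℂ, where M¹ = M ⊗ I, M² = I ⊗ M (4×4 Kronecker products) and R(u) = u·Id_4 − i·P with P the flip matrix on ℂ²⊗ℂ² and i the imaginary unit. Then the traces t(u) = A(u) + D(u) commute: t(u)·t(v) = t(v)·t(u) for all u, v ∈ ℂ with u − v ∉ {i, −i}. -/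

import Mathlib

noncomputable section

open Matrix Kronecker

def Pflip : Matrix (Fin 2 × Fin 2) (Fin 2 × Fin 2) ℂ :=
  Matrix.of fun p q => if p.1 = q.2 ∧ p.2 = q.1 then 1 else 0

def Rmat (u : ℂ) : Matrix (Fin 2 × Fin 2) (Fin 2 × Fin 2) ℂ :=
  u • (1 : Matrix (Fin 2 × Fin 2) (Fin 2 × Fin 2) ℂ) - Complex.I • Pflip

lemma Pflip_sq : Pflip * Pflip = 1 := by
  ext ⟨i, i'⟩ ⟨j, j'⟩
  simp only [Matrix.mul_apply, Pflip, Matrix.of_apply, Fintype.sum_prod_type,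
    Matrix.one_apply, Prod.mk.injEq]
  fin_cases i <;> fin_cases i' <;> fin_cases j <;> fin_cases j' <;>
    simp [Fin.sum_univ_two]

def Smat (w : ℂ) : Matrix (Fin 2 × Fin 2) (Fin 2 × Fin 2) ℂ :=
  (w ^ 2 + 1)⁻¹ • (w • (1 : Matrix (Fin 2 × Fin 2) (Fin 2 × Fin 2) ℂ) + Complex.I • Pflip)

lemma wsq_ne (w : ℂ) (h1 : w ≠ Complex.I) (h2 : w ≠ -Complex.I) : w ^ 2 + 1 ≠ 0 := by
  intro h
  have : (w - Complex.I) * (w + Complex.I) = 0 := by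
    linear_combination h - Complex.I_sq
  rcases mul_eq_zero.mp this with h' | h'
  · exact h1 (by linear_combination h')
  · exact h2 (by linear_combination h')

lemma Rmat_Smat (w : ℂ) (h1 : w ≠ Complex.I) (h2 : w ≠ -Complex.I) :
    Rmat w * Smat w = 1 ∧ Smat w * Rmat w = 1 := by
  have hw := wsq_ne w h1 h2
  have key : (w • (1 : Matrix (Fin 2 × Fin 2) (Fin 2 × Fin 2) ℂ) - Complex.I • Pflip) *
      (w • 1 + Complex.I • Pflip) = (w ^ 2 + 1) • 1 := by
    rw [sub_mul, mul_add, mul_add]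
    simp [Matrix.smul_mul, Matrix.mul_smul, Pflip_sq, smul_smul, Complex.I_mul_I]
    module
  have key2 : (w • (1 : Matrix (Fin 2 × Fin 2) (Fin 2 × Fin 2) ℂ) + Complex.I • Pflip) *
      (w • 1 - Complex.I • Pflip) = (w ^ 2 + 1) • 1 := by
    rw [add_mul, mul_sub, mul_sub]
    simp [Matrix.smul_mul, Matrix.mul_smul, Pflip_sq, smul_smul, Complex.I_mul_I]
    module
  constructor
  · rw [Rmat, Smat, Matrix.mul_smul, key, smul_smul, inv_mul_cancel₀ hw, one_smul]
  · rw [Rmat, Smat, Matrix.smul_mul, key2, smul_smul, inv_mul_cancel₀ hw, one_smul]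

lemma trace_map_comm {n : Type*} [Fintype n] {R : Type*} [Ring R] [Algebra ℂ R]
    (S : Matrix n n ℂ) (X : Matrix n n R) :
    ((S.map (algebraMap ℂ R)) * X).trace = (X * S.map (algebraMap ℂ R)).trace := by
  simp only [Matrix.trace, Matrix.diag, Matrix.mul_apply, Matrix.map_apply]
  rw [Finset.sum_comm]
  exact Finset.sum_congr rfl fun i _ => Finset.sum_congr rfl fun j _ =>
    Algebra.commutes (S j i) (X i j)

theorem transfer_matrices_commute
    (R : Type*) [Ring R] [Algebra ℂ R] (A B C D : ℂ → R)
    (T : ℂ → Matrix (Fin 2) (Fin 2) R)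
    (hT : ∀ u : ℂ, T u = !![A u, B u; C u, D u])
    (hRTT : ∀ u v : ℂ,
      ((1 : Matrix (Fin 2) (Fin 2) R) ⊗ₖ T v) * (T u ⊗ₖ (1 : Matrix (Fin 2) (Fin 2) R)) *
          (Rmat (u - v)).map (algebraMap ℂ R) =
        (Rmat (u - v)).map (algebraMap ℂ R) * (T u ⊗ₖ (1 : Matrix (Fin 2) (Fin 2) R)) *
          ((1 : Matrix (Fin 2) (Fin 2) R) ⊗ₖ T v)) :
    ∀ u v : ℂ, u - v ≠ Complex.I → u - v ≠ -Complex.I →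
      (A u + D u) * (A v + D v) = (A v + D v) * (A u + D u) := by
  intro u v h1 h2
  set w := u - v with hw
  obtain ⟨hRS, hSR⟩ := Rmat_Smat w h1 h2
  set f := algebraMap ℂ R
  set R' := (Rmat w).map f with hR'
  set S' := (Smat w).map f with hS'
  have hRS' : R' * S' = 1 := by
    rw [hR', hS', ← Matrix.map_mul, hRS, Matrix.map_one f (map_zero f) (map_one f)]
  have hSR' : S' * R' = 1 := by
    rw [hR', hS', ← Matrix.map_mul, hSR, Matrix.map_one f (map_zero f) (map_one f)]
  set M := ((1 : Matrix (Fin 2) (Fin 2) R) ⊗ₖ T v) * (T u ⊗ₖ (1 : Matrix (Fin 2) (Fin 2) R)) with hM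
  set N := (T u ⊗ₖ (1 : Matrix (Fin 2) (Fin 2) R)) * ((1 : Matrix (Fin 2) (Fin 2) R) ⊗ₖ T v) with hN
  have hrel : M * R' = R' * N := by rw [hM, hN, hRTT u v, mul_assoc]
  have htr : N.trace = M.trace := by
    have hN' : N = S' * (M * R') := by
      rw [hrel, ← mul_assoc, hSR', one_mul]
    rw [hN', hS', trace_map_comm, mul_assoc, ← hS', hRS', mul_one]
  have hMtr : M.trace = (A v + D v) * (A u + D u) := by
    rw [hM, hT u, hT v]
    simp [Matrix.trace, Matrix.diag, Matrix.mul_apply, Fintype.sum_prod_type,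
      Fin.sum_univ_two, Matrix.one_apply, kroneckerMap_apply]
    noncomm_ring
  have hNtr : N.trace = (A u + D u) * (A v + D v) := by
    rw [hN, hT u, hT v]
    simp [Matrix.trace, Matrix.diag, Matrix.mul_apply, Fintype.sum_prod_type,
      Fin.sum_univ_two, Matrix.one_apply, kroneckerMap_apply]
    noncomm_ring
  rw [← hNtr, htr, hMtr]
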